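/- Let (K,Σ) be an exact 3-cover instance and (G,b,r) the graph instance constructed from it. Suppose J ⊆ {1,…,m} is an exact 3-cover of K. Define M as the union of: the rank-1 edges (a_{j_1},v_{k_1}), (a_{j_2},v_{k_2}), (a_{j_3},v_{k_3}) for every j ∈ J with T_j = {k_1,k_2,k_3}; the edges (a_{i_4},h_i) and (a_{i_4},h'_i) for every 1 ≤ i ≤ m; and the edges (a_{i_5}, g_{t(i)}) for i ∉ J, where t is a bijection from {1,…,m} \ J onto {1,…,m−|K|/3}. Then M is a popular b-matching of (G,b,r). -/

import Mathlib

open Finset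

section Core

variable {A H : Type*} [DecidableEq A] [DecidableEq H]

/-- The degree of an agent `a` in an edge set `M`. -/
def adeg (M : Finset (A × H)) (a : A) : ℕ := (M.filter fun e => e.1 = a).card

/-- The degree of a house `h` in an edge set `M`. -/
def hdeg (M : Finset (A × H)) (h : H) : ℕ := (M.filter fun e => e.2 = h).card

/-- `M` is a b-matching of the instance with edge set `E` and capacities `bA` on agents
and `bH` on houses. -/
def IsBM (E : Finset (A × H)) (bA : A → ℕ) (bH : H → ℕ) (M : Finset (A × H)) : Prop :=
  M ⊆ E ∧ (∀ a : A, adeg M a ≤ bA a) ∧ (∀ h : H, hdeg M h ≤ bH h)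

/-- The `i`-th entry of the signature of agent `a` in `M`: the number of rank-`i` edges
of `M` incident with `a`. -/
def cnt (rk : A × H → ℕ) (M : Finset (A × H)) (a : A) (i : ℕ) : ℕ :=
  (M.filter fun e => e.1 = a ∧ rk e = i).card

/-- Agent `a` prefers `M'` to `M`: the signature of `a` in `M'` is lexicographically
greater than its signature in `M`. -/
def Prefers (rk : A × H → ℕ) (M' M : Finset (A × H)) (a : A) : Prop :=
  ∃ j : ℕ, (∀ i < j, cnt rk M' a i = cnt rk M a i) ∧ cnt rk M a j < cnt rk M' a j

/-- `M'` is more popular than `M`: strictly more agents prefer `M'` to `M` than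
prefer `M` to `M'`. -/
def MorePop [Fintype A] (rk : A × H → ℕ) (M' M : Finset (A × H)) : Prop :=
  Nat.card {a : A // Prefers rk M M' a} < Nat.card {a : A // Prefers rk M' M a}

/-- `M` is a popular b-matching. -/
def Popular [Fintype A] (E : Finset (A × H)) (bA : A → ℕ) (bH : H → ℕ) (rk : A × H → ℕ)
    (M : Finset (A × H)) : Prop :=
  IsBM E bA bH M ∧ ∀ M' : Finset (A × H), IsBM E bA bH M' → ¬ MorePop rk M' M

/-- An even path with respect to `M`, with vertex sequence
`a 0, h 0, a 1, h 1, …, a k, h k`: it is alternating, its first edge `(a 0, h 0)` is not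
in `M`, no edge is repeated, and for each `i`, the `M`-edge `(h i, a (i+1))` has the same
rank as the following non-`M`-edge `(a (i+1), h (i+1))`.  It is the even path
`P_e(a 0, h k)`; extended by a further `M`-edge `(h k, a')` it yields `P_e(a 0, a')`. -/
structure EvenPath (E M : Finset (A × H)) (rk : A × H → ℕ) (k : ℕ) where
  a : Fin (k + 1) → A
  h : Fin (k + 1) → H
  fwd_mem : ∀ i : Fin (k + 1), (a i, h i) ∈ E
  fwd_not : ∀ i : Fin (k + 1), (a i, h i) ∉ M
  bwd_mem : ∀ i : Fin k, (a i.succ, h i.castSucc) ∈ M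
  rank_eq : ∀ i : Fin k, rk (a i.succ, h i.castSucc) = rk (a i.succ, h i.succ)
  fwd_inj : ∀ i j : Fin (k + 1), (a i, h i) = (a j, h j) → i = j
  bwd_inj : ∀ i j : Fin k, (a i.succ, h i.castSucc) = (a j.succ, h j.castSucc) → i = j

namespace EvenPath

variable {E M : Finset (A × H)} {rk : A × H → ℕ} {k : ℕ}

/-- The non-`M`-edges of an even path. -/
def fwdEdges (P : EvenPath E M rk k) : Finset (A × H) :=
  Finset.univ.image fun i : Fin (k + 1) => (P.a i, P.h i)

/-- The `M`-edges of an even path. -/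
def bwdEdges (P : EvenPath E M rk k) : Finset (A × H) :=
  Finset.univ.image fun i : Fin k => (P.a i.succ, P.h i.castSucc)

/-- All edges of an even path. -/
def edges (P : EvenPath E M rk k) : Finset (A × H) := P.fwdEdges ∪ P.bwdEdges

end EvenPath

/-- The condition on the starting agent `a0` (with first house `h0`) of paths of
types (1), (2) and (3): `a0` is unsaturated, or `M` contains an edge incident with `a0`
of rank (strictly) worse than that of `(a0, h0)`. -/
def StartCond (bA : A → ℕ) (rk : A × H → ℕ) (M : Finset (A × H)) (a0 : A) (h0 : H) : Prop :=
  adeg M a0 ≠ bA a0 ∨ ∃ e ∈ M, e.1 = a0 ∧ rk (a0, h0) < rk e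

/-- A path of type (1) with respect to `M`: `(P_e(a_1, h_{k-1}), a_k, h_k, a_{k+1})`. -/
structure Type1 (E M : Finset (A × H)) (bA : A → ℕ) (rk : A × H → ℕ) where
  k : ℕ
  P : EvenPath E M rk k
  ak : A
  hk : H
  ak1 : A
  mem2 : (ak, hk) ∈ E
  e1 : (ak, P.h (Fin.last k)) ∈ M
  e2 : (ak, hk) ∉ M
  e3 : (ak1, hk) ∈ M
  start : StartCond bA rk M (P.a 0) (P.h 0)
  rdrop : rk (ak, hk) < rk (ak, P.h (Fin.last k))
  dcase : (P.a 0 ≠ ak ∧ P.a 0 ≠ ak1 ∧ ak ≠ ak1) ∨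
      (P.a 0 ≠ ak ∧ P.a 0 = ak1 ∧ rk (P.a 0, P.h 0) < rk (P.a 0, hk))
  ne1 : (ak, P.h (Fin.last k)) ∉ P.bwdEdges
  ne2 : (ak, hk) ∉ P.fwdEdges
  ne3 : (ak1, hk) ∉ P.bwdEdges ∧ (ak1, hk) ≠ (ak, P.h (Fin.last k))

/-- The edge set of a path of type (1). -/
def Type1.edges {E M : Finset (A × H)} {bA : A → ℕ} {rk : A × H → ℕ}
    (T : Type1 E M bA rk) : Finset (A × H) :=
  T.P.edges ∪ {(T.ak, T.P.h (Fin.last T.k)), (T.ak, T.hk), (T.ak1, T.hk)}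

/-- A path of type (2) with respect to `M`: `(P_e(a_1, a), P_e^r(a, a'_1))`, two
edge-disjoint even paths both ending at the same agent `am`. -/
structure Type2 (E M : Finset (A × H)) (bA : A → ℕ) (rk : A × H → ℕ) where
  k : ℕ
  k' : ℕ
  P : EvenPath E M rk k
  P' : EvenPath E M rk k'
  am : A
  cl : (am, P.h (Fin.last k)) ∈ M
  cl' : (am, P'.h (Fin.last k')) ∈ M
  clne : (am, P.h (Fin.last k)) ∉ P.bwdEdges
  clne' : (am, P'.h (Fin.last k')) ∉ P'.bwdEdges
  start : StartCond bA rk M (P.a 0) (P.h 0)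
  start' : StartCond bA rk M (P'.a 0) (P'.h 0)
  dist : P.a 0 ≠ am ∧ P'.a 0 ≠ am ∧ P.a 0 ≠ P'.a 0
  disj : Disjoint (P.edges ∪ {(am, P.h (Fin.last k))}) (P'.edges ∪ {(am, P'.h (Fin.last k'))})

/-- The edge set of a path of type (2). -/
def Type2.edges {E M : Finset (A × H)} {bA : A → ℕ} {rk : A × H → ℕ}
    (T : Type2 E M bA rk) : Finset (A × H) :=
  (T.P.edges ∪ {(T.am, T.P.h (Fin.last T.k))}) ∪
    (T.P'.edges ∪ {(T.am, T.P'.h (Fin.last T.k'))})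

/-- A path of type (3) with respect to `M`: an even path `P_e(a_1, h)` ending at an
unsaturated house `h`. -/
structure Type3 (E M : Finset (A × H)) (bA : A → ℕ) (bH : H → ℕ) (rk : A × H → ℕ) where
  k : ℕ
  P : EvenPath E M rk k
  start : StartCond bA rk M (P.a 0) (P.h 0)
  unsat : hdeg M (P.h (Fin.last k)) ≠ bH (P.h (Fin.last k))

/-- A path of type (4) with respect to `M`: a closed alternating path
`(P_e(a_1, h_k), a_1)` with `rk (h_k, a_1) > rk (a_1, h_1)`. -/
structure Type4 (E M : Finset (A × H)) (rk : A × H → ℕ) where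
  k : ℕ
  P : EvenPath E M rk k
  cl : (P.a 0, P.h (Fin.last k)) ∈ M
  clne : (P.a 0, P.h (Fin.last k)) ∉ P.bwdEdges
  rgt : rk (P.a 0, P.h 0) < rk (P.a 0, P.h (Fin.last k))

/-- The edge set of a path of type (4). -/
def Type4.edges {E M : Finset (A × H)} {rk : A × H → ℕ} (T : Type4 E M rk) :
    Finset (A × H) :=
  T.P.edges ∪ {(T.P.a 0, T.P.h (Fin.last T.k))}

end Core

section X3C

/-- `gnum K m = m - |K| / 3`, the number of houses `g_t`. -/
def gnum (K : Type*) [Fintype K] (m : ℕ) : ℕ := m - Fintype.card K / 3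

/-- The houses of the constructed instance: `v k` (for `k ∈ K`), `h i`, `h' i`
(for `1 ≤ i ≤ m`) and `g t` (for `1 ≤ t ≤ m - |K|/3`). -/
abbrev XH (K : Type*) (m gk : ℕ) := K ⊕ (Fin m ⊕ (Fin m ⊕ Fin gk))

/-- The agents of the constructed instance: `a i j` for `1 ≤ i ≤ m`, `1 ≤ j ≤ 5`. -/
abbrev XA (m : ℕ) := Fin m × Fin 5

/-- The house `v_k`. -/
def xhv (K : Type*) (m gk : ℕ) (x : K) : XH K m gk := Sum.inl x

/-- The house `h_i`. -/
def xhh (K : Type*) (m gk : ℕ) (i : Fin m) : XH K m gk := Sum.inr (Sum.inl i)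

/-- The house `h'_i`. -/
def xhh' (K : Type*) (m gk : ℕ) (i : Fin m) : XH K m gk := Sum.inr (Sum.inr (Sum.inl i))

/-- The house `g_t`. -/
def xhg (K : Type*) (m gk : ℕ) (t : Fin gk) : XH K m gk := Sum.inr (Sum.inr (Sum.inr t))

/-- The edge set of the constructed instance, where `trip i s` (`s = 1, 2, 3`) enumerates
the three elements of the set `T_i`: for each `i`, rank-1 edges `(a_{i_s}, v_{trip i s})`
and rank-2 edges `(a_{i_s}, h_i)` for `s = 1, 2, 3`, a rank-1 edge `(a_{i_4}, h_i)`,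
rank-2 edges `(a_{i_4}, h'_i)` and `(a_{i_5}, h'_i)`, and rank-1 edges `(a_{i_5}, g_t)`
for every `t`. -/
def xE (K : Type*) [Fintype K] [DecidableEq K] (m gk : ℕ) (trip : Fin m → Fin 3 → K) :
    Finset (XA m × XH K m gk) :=
  (Finset.univ : Finset (Fin m)).biUnion fun i =>
    ((Finset.univ : Finset (Fin 3)).image fun j =>
        ((i, (j.castLE (by omega) : Fin 5)), xhv K m gk (trip i j))) ∪
    ((Finset.univ : Finset (Fin 3)).image fun j =>
        ((i, (j.castLE (by omega) : Fin 5)), xhh K m gk i)) ∪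
    {((i, (3 : Fin 5)), xhh K m gk i), ((i, (3 : Fin 5)), xhh' K m gk i),
      ((i, (4 : Fin 5)), xhh' K m gk i)} ∪
    ((Finset.univ : Finset (Fin gk)).image fun t => ((i, (4 : Fin 5)), xhg K m gk t))

/-- The rank function of the constructed instance: edges to the houses `v_k` and `g_t`
have rank 1, edges to `h_i` have rank 1 from `a_{i_4}` and rank 2 otherwise, and edges
to `h'_i` have rank 2. -/
def xRk (K : Type*) (m gk : ℕ) : XA m × XH K m gk → ℕ
  | (_, Sum.inl _) => 1
  | ((_, j), Sum.inr (Sum.inl _)) => if j = (3 : Fin 5) then 1 else 2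
  | (_, Sum.inr (Sum.inr (Sum.inl _))) => 2
  | (_, Sum.inr (Sum.inr (Sum.inr _))) => 1

/-- The agent capacities: `a_{i_4}` has capacity 2, all other agents capacity 1. -/
def xbA (m : ℕ) : XA m → ℕ := fun q => if q.2 = (3 : Fin 5) then 2 else 1

/-- The house capacities: every house has capacity 1. -/
def xbH (K : Type*) (m gk : ℕ) : XH K m gk → ℕ := fun _ => 1

/-- `J` is an exact 3-cover: `{T_j : j ∈ J}` is a partition of `K`, where
`T_j = {trip j 1, trip j 2, trip j 3}`. -/
def IsX3C {K : Type*} (m : ℕ) (trip : Fin m → Fin 3 → K) (J : Finset (Fin m)) : Prop :=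
  ∀ x : K, ∃! j : Fin m, j ∈ J ∧ ∃ s : Fin 3, trip j s = x

/-- The b-matching built from an exact 3-cover `J` and a bijection `σ` from the
complement of `J` onto the houses `g_t`. -/
def xM (K : Type*) [Fintype K] [DecidableEq K] (m : ℕ) (trip : Fin m → Fin 3 → K)
    (J : Finset (Fin m)) (σ : Fin m → Fin (gnum K m)) :
    Finset (XA m × XH K m (gnum K m)) :=
  (J.biUnion fun j => (Finset.univ : Finset (Fin 3)).image fun s =>
      ((j, (s.castLE (by omega) : Fin 5)), xhv K m (gnum K m) (trip j s))) ∪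
  ((Finset.univ : Finset (Fin m)).biUnion fun i =>
      {((i, (3 : Fin 5)), xhh K m (gnum K m) i),
        ((i, (3 : Fin 5)), xhh' K m (gnum K m) i)}) ∪
  (((Finset.univ : Finset (Fin m)).filter fun i => i ∉ J).image fun i =>
      ((i, (4 : Fin 5)), xhg K m (gnum K m) (σ i)))

end X3C

section Aux
open Finset
variable {A H : Type*} [DecidableEq A] [DecidableEq H]

lemma cnt_le_adeg (rk : A × H → ℕ) (X : Finset (A × H)) (a : A) (r : ℕ) :
    cnt rk X a r ≤ adeg X a :=
  Finset.card_le_card (fun e he => by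
    simp only [Finset.mem_filter] at he ⊢; exact ⟨he.1, he.2.1⟩)

lemma cnt_pos_iff {rk : A × H → ℕ} {X : Finset (A × H)} {a : A} {r : ℕ} :
    0 < cnt rk X a r ↔ ∃ e ∈ X, e.1 = a ∧ rk e = r := by
  simp [cnt, Finset.card_pos, Finset.filter_nonempty_iff]

lemma cnt_le_one {rk : A × H → ℕ} {X : Finset (A × H)} {a : A} {r : ℕ} (e0 : A × H)
    (h : ∀ e ∈ X, e.1 = a → rk e = r → e = e0) : cnt rk X a r ≤ 1 :=
  Finset.card_le_one.2 (fun e he f hf => by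
    simp only [Finset.mem_filter] at he hf
    rw [h e he.1 he.2.1 he.2.2, h f hf.1 hf.2.1 hf.2.2])

lemma cnt12_le_adeg (rk : A × H → ℕ) (X : Finset (A × H)) (a : A) :
    cnt rk X a 1 + cnt rk X a 2 ≤ adeg X a := by
  classical
  rw [cnt, cnt, adeg, ← Finset.card_union_of_disjoint (by
    rw [Finset.disjoint_left]; intro e he hf
    simp only [Finset.mem_filter] at he hf; omega)]
  exact Finset.card_le_card (by intro e; simp only [Finset.mem_union, Finset.mem_filter]; tauto)

lemma adeg_eq_zero {X : Finset (A × H)} {a : A} (h : ∀ e ∈ X, e.1 ≠ a) : adeg X a = 0 := by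
  rw [adeg, Finset.card_eq_zero, Finset.filter_eq_empty_iff]; exact h

lemma adeg_le_one {X : Finset (A × H)} {a : A} (e0 : A × H)
    (h : ∀ e ∈ X, e.1 = a → e = e0) : adeg X a ≤ 1 :=
  Finset.card_le_one.2 (fun e he f hf => by
    simp only [Finset.mem_filter] at he hf
    rw [h e he.1 he.2, h f hf.1 hf.2])

lemma adeg_le_two {X : Finset (A × H)} {a : A} (e0 e1 : A × H)
    (h : ∀ e ∈ X, e.1 = a → e = e0 ∨ e = e1) : adeg X a ≤ 2 := by
  calc adeg X a ≤ ({e0, e1} : Finset (A × H)).card := Finset.card_le_card (by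
        intro e he; simp only [Finset.mem_filter] at he
        simp only [Finset.mem_insert, Finset.mem_singleton]
        exact h e he.1 he.2)
    _ ≤ 2 := Finset.card_insert_le _ _ |>.trans (by simp)

lemma hdeg_le_one {X : Finset (A × H)} {h0 : H}
    (h : ∀ e ∈ X, e.2 = h0 → ∀ e' ∈ X, e'.2 = h0 → e = e') : hdeg X h0 ≤ 1 :=
  Finset.card_le_one.2 (fun e he f hf => by
    simp only [Finset.mem_filter] at he hf
    exact h e he.1 he.2 f hf.1 hf.2)

lemma edge_unique_of_hdeg {X : Finset (A × H)} (hX : ∀ h : H, hdeg X h ≤ 1) {e e' : A × H}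
    (he : e ∈ X) (he' : e' ∈ X) (h : e.2 = e'.2) : e = e' := by
  have h1 := hX e.2
  rw [hdeg] at h1
  exact Finset.card_le_one.1 h1 e (by simp [Finset.mem_filter, he]) e'
    (by simp [Finset.mem_filter, he', h.symm])

end Aux
section Aux2
open Finset
set_option linter.unusedSectionVars false

variable {K : Type*} [Fintype K] [DecidableEq K] {m gk : ℕ} {trip : Fin m → Fin 3 → K}

lemma xRk_one_or_two (e : XA m × XH K m gk) : xRk K m gk e = 1 ∨ xRk K m gk e = 2 := by
  obtain ⟨⟨i, c⟩, h⟩ := e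
  rcases h with x | h | h | t
  · exact Or.inl rfl
  · by_cases hc : c = 3 <;> simp [xRk, hc]
  · exact Or.inr rfl
  · exact Or.inl rfl

lemma cnt_xRk_zero (X : Finset (XA m × XH K m gk)) (a : XA m) {r : ℕ}
    (hr : r ≠ 1 ∧ r ≠ 2) : cnt (xRk K m gk) X a r = 0 := by
  rw [cnt, Finset.card_eq_zero, Finset.filter_eq_empty_iff]
  rintro e he ⟨h1, h2⟩
  rcases xRk_one_or_two e with h | h <;> omega

lemma xprefers_iff (X Y : Finset (XA m × XH K m gk)) (a : XA m) :
    Prefers (xRk K m gk) X Y a ↔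
      cnt (xRk K m gk) Y a 1 < cnt (xRk K m gk) X a 1 ∨
      (cnt (xRk K m gk) X a 1 = cnt (xRk K m gk) Y a 1 ∧
        cnt (xRk K m gk) Y a 2 < cnt (xRk K m gk) X a 2) := by
  constructor
  · rintro ⟨j, hlt, hj⟩
    match j with
    | 0 =>
      rw [cnt_xRk_zero X a (by omega), cnt_xRk_zero Y a (by omega)] at hj; omega
    | 1 => exact Or.inl hj
    | 2 => exact Or.inr ⟨hlt 1 (by omega), hj⟩
    | (n+3) =>
      rw [cnt_xRk_zero X a (by omega), cnt_xRk_zero Y a (by omega)] at hj; omega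
  · rintro (h | ⟨h1, h2⟩)
    · refine ⟨1, fun i hi => ?_, h⟩
      have : i = 0 := by omega
      subst this
      rw [cnt_xRk_zero X a (by omega), cnt_xRk_zero Y a (by omega)]
    · refine ⟨2, fun i hi => ?_, h2⟩
      match i with
      | 0 => rw [cnt_xRk_zero X a (by omega), cnt_xRk_zero Y a (by omega)]
      | 1 => exact h1
      | (n+2) => omega

end Aux2
section Aux3
open Finset
set_option linter.unusedSectionVars false

variable {K : Type*} [Fintype K] [DecidableEq K] {m gk : ℕ} {trip : Fin m → Fin 3 → K}

lemma xE_shape {e : XA m × XH K m gk} (he : e ∈ xE K m gk trip) :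
    (e.1.2.val ≤ 2 ∧ (e.2 = Sum.inl (trip e.1.1 ⟨e.1.2.val % 3, by omega⟩) ∨
        e.2 = Sum.inr (Sum.inl e.1.1))) ∨
    (e.1.2 = 3 ∧ (e.2 = Sum.inr (Sum.inl e.1.1) ∨ e.2 = Sum.inr (Sum.inr (Sum.inl e.1.1)))) ∨
    (e.1.2 = 4 ∧ (e.2 = Sum.inr (Sum.inr (Sum.inl e.1.1)) ∨
        ∃ t, e.2 = Sum.inr (Sum.inr (Sum.inr t)))) := by
  simp only [xE, xhv, xhh, xhh', xhg, Finset.mem_biUnion, Finset.mem_union, Finset.mem_image,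
    Finset.mem_univ, true_and, Finset.mem_insert, Finset.mem_singleton] at he
  obtain ⟨i, hc⟩ := he
  rcases hc with ((⟨s, hs⟩ | ⟨s, hs⟩) | hs | hs | hs) | ⟨t, ht⟩
  · subst hs; left
    refine ⟨by simp [Fin.castLE]; omega, Or.inl ?_⟩
    simp only [Fin.castLE]
    congr 1
    apply congrArg
    ext
    simp [Nat.mod_eq_of_lt s.isLt]
  · subst hs; left
    exact ⟨by simp [Fin.castLE]; omega, Or.inr rfl⟩
  · subst hs; right; left; exact ⟨rfl, Or.inl rfl⟩
  · subst hs; right; left; exact ⟨rfl, Or.inr rfl⟩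
  · subst hs; right; right; exact ⟨rfl, Or.inl rfl⟩
  · subst ht; right; right; exact ⟨rfl, Or.inr ⟨t, rfl⟩⟩

end Aux3
section Aux4
open Finset
set_option linter.unusedSectionVars false

variable {K : Type*} [Fintype K] [DecidableEq K] {m gk : ℕ} {trip : Fin m → Fin 3 → K}

lemma fin5_3_val : ((3 : Fin 5) : ℕ) = 3 := rfl
lemma fin5_4_val : ((4 : Fin 5) : ℕ) = 4 := rfl

/-- rank-1 edge at a column-≤2 agent goes to its v-house -/
lemma eA {e : XA m × XH K m gk} (he : e ∈ xE K m gk trip) (h2 : e.1.2.val ≤ 2)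
    (hr : xRk K m gk e = 1) :
    e.2 = Sum.inl (trip e.1.1 ⟨e.1.2.val % 3, by omega⟩) := by
  obtain ⟨⟨i, c⟩, h⟩ := e
  rcases xE_shape he with ⟨_, hh | hh⟩ | ⟨hc, _⟩ | ⟨hc, _⟩
  · exact hh
  · exfalso; simp only at hh; subst hh
    have hc3 : c ≠ 3 := by intro h; subst h; simp [fin5_3_val] at h2
    simp [xRk, hc3] at hr
  · exfalso; simp only at hc; subst hc; simp [fin5_3_val] at h2
  · exfalso; simp only at hc; subst hc; simp [fin5_4_val] at h2

lemma eB {e : XA m × XH K m gk} (he : e ∈ xE K m gk trip) (h2 : e.1.2.val ≤ 2)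
    (hr : xRk K m gk e = 2) : e.2 = Sum.inr (Sum.inl e.1.1) := by
  obtain ⟨⟨i, c⟩, h⟩ := e
  rcases xE_shape he with ⟨_, hh | hh⟩ | ⟨hc, _⟩ | ⟨hc, _⟩
  · exfalso; simp only at hh; rw [hh] at hr; simp [xRk] at hr
  · exact hh
  · exfalso; simp only at hc; subst hc; simp [fin5_3_val] at h2
  · exfalso; simp only at hc; subst hc; simp [fin5_4_val] at h2

lemma eC1 {e : XA m × XH K m gk} (he : e ∈ xE K m gk trip) (h2 : e.1.2 = 3)
    (hr : xRk K m gk e = 1) : e.2 = Sum.inr (Sum.inl e.1.1) := by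
  obtain ⟨⟨i, c⟩, h⟩ := e
  simp only at h2; subst h2
  rcases xE_shape he with ⟨hv, _⟩ | ⟨_, hh | hh⟩ | ⟨hc, _⟩
  · exfalso; simp [fin5_3_val] at hv
  · exact hh
  · exfalso; simp only at hh; rw [hh] at hr; simp [xRk] at hr
  · { simp only at hc; exact absurd hc (by decide) }

lemma eC2 {e : XA m × XH K m gk} (he : e ∈ xE K m gk trip) (h2 : e.1.2 = 3)
    (hr : xRk K m gk e = 2) : e.2 = Sum.inr (Sum.inr (Sum.inl e.1.1)) := by
  obtain ⟨⟨i, c⟩, h⟩ := e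
  simp only at h2; subst h2
  rcases xE_shape he with ⟨hv, _⟩ | ⟨_, hh | hh⟩ | ⟨hc, _⟩
  · exfalso; simp [fin5_3_val] at hv
  · exfalso; simp only at hh; rw [hh] at hr; simp [xRk] at hr
  · exact hh
  · { simp only at hc; exact absurd hc (by decide) }

lemma eD1 {e : XA m × XH K m gk} (he : e ∈ xE K m gk trip) (h2 : e.1.2 = 4)
    (hr : xRk K m gk e = 1) : ∃ t, e.2 = Sum.inr (Sum.inr (Sum.inr t)) := by
  obtain ⟨⟨i, c⟩, h⟩ := e
  simp only at h2; subst h2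
  rcases xE_shape he with ⟨hv, _⟩ | ⟨hc, _⟩ | ⟨_, hh | hh⟩
  · exfalso; simp [fin5_4_val] at hv
  · { simp only at hc; exact absurd hc (by decide) }
  · exfalso; simp only at hh; rw [hh] at hr; simp [xRk] at hr
  · exact hh

lemma eD2 {e : XA m × XH K m gk} (he : e ∈ xE K m gk trip) (h2 : e.1.2 = 4)
    (hr : xRk K m gk e = 2) : e.2 = Sum.inr (Sum.inr (Sum.inl e.1.1)) := by
  obtain ⟨⟨i, c⟩, h⟩ := e
  simp only at h2; subst h2
  rcases xE_shape he with ⟨hv, _⟩ | ⟨hc, _⟩ | ⟨_, hh | hh⟩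
  · exfalso; simp [fin5_4_val] at hv
  · { simp only at hc; exact absurd hc (by decide) }
  · exact hh
  · exfalso; obtain ⟨t, ht⟩ := hh; simp only at ht; rw [ht] at hr; simp [xRk] at hr

end Aux4
section Aux5
open Finset
set_option linter.unusedSectionVars false

variable {K : Type*} [Fintype K] [DecidableEq K] {m gk : ℕ} {trip : Fin m → Fin 3 → K}
  {J : Finset (Fin m)} {σ : Fin m → Fin (gnum K m)}

lemma xM_shape {e : XA m × XH K m (gnum K m)} (he : e ∈ xM K m trip J σ) :
    (e.1.2.val ≤ 2 ∧ e.1.1 ∈ J ∧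
        e.2 = Sum.inl (trip e.1.1 ⟨e.1.2.val % 3, by omega⟩)) ∨
    (e.1.2 = 3 ∧ (e.2 = Sum.inr (Sum.inl e.1.1) ∨ e.2 = Sum.inr (Sum.inr (Sum.inl e.1.1)))) ∨
    (e.1.2 = 4 ∧ e.1.1 ∉ J ∧ e.2 = Sum.inr (Sum.inr (Sum.inr (σ e.1.1)))) := by
  simp only [xM, xhv, xhh, xhh', xhg, Finset.mem_union, Finset.mem_biUnion, Finset.mem_image,
    Finset.mem_univ, true_and, Finset.mem_insert, Finset.mem_singleton, Finset.mem_filter] at he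
  rcases he with (⟨j, hj, s, hs⟩ | ⟨i, hi | hi⟩) | ⟨i, hi, hie⟩
  · rw [← hs]; left
    refine ⟨by simp [Fin.castLE]; omega, hj, ?_⟩
    simp only [Fin.castLE]
    congr 2
    ext
    simp [Nat.mod_eq_of_lt s.isLt]
  · rw [hi]; right; left; exact ⟨rfl, Or.inl rfl⟩
  · rw [hi]; right; left; exact ⟨rfl, Or.inr rfl⟩
  · rw [← hie]; right; right; exact ⟨rfl, hi, rfl⟩

lemma mv_mem {j : Fin m} (hj : j ∈ J) (s : Fin 3) :
    ((j, (s.castLE (by omega) : Fin 5)), Sum.inl (trip j s)) ∈ xM K m trip J σ := by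
  simp only [xM, xhv, Finset.mem_union, Finset.mem_biUnion, Finset.mem_image, Finset.mem_univ,
    true_and]
  exact Or.inl (Or.inl ⟨j, hj, s, rfl⟩)

lemma mh_mem (i : Fin m) :
    ((i, (3 : Fin 5)), (Sum.inr (Sum.inl i) : XH K m (gnum K m))) ∈ xM K m trip J σ := by
  simp only [xM, xhh, Finset.mem_union, Finset.mem_biUnion, Finset.mem_univ, true_and,
    Finset.mem_insert, Finset.mem_singleton]
  exact Or.inl (Or.inr ⟨i, Or.inl rfl⟩)

lemma mh'_mem (i : Fin m) :
    ((i, (3 : Fin 5)), (Sum.inr (Sum.inr (Sum.inl i)) : XH K m (gnum K m))) ∈ xM K m trip J σ := by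
  simp only [xM, xhh', Finset.mem_union, Finset.mem_biUnion, Finset.mem_univ, true_and,
    Finset.mem_insert, Finset.mem_singleton]
  exact Or.inl (Or.inr ⟨i, Or.inr rfl⟩)

lemma mg_mem {i : Fin m} (hi : i ∉ J) :
    ((i, (4 : Fin 5)), (Sum.inr (Sum.inr (Sum.inr (σ i))) : XH K m (gnum K m))) ∈
      xM K m trip J σ := by
  simp only [xM, xhg, Finset.mem_union, Finset.mem_image, Finset.mem_filter, Finset.mem_univ,
    true_and]
  exact Or.inr ⟨i, hi, rfl⟩

lemma xev_mem (i : Fin m) (s : Fin 3) :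
    (((i, (s.castLE (by omega) : Fin 5)), Sum.inl (trip i s)) : XA m × XH K m gk) ∈
      xE K m gk trip :=
  Finset.mem_biUnion.mpr ⟨i, Finset.mem_univ i, Finset.mem_union_left _ (Finset.mem_union_left _
    (Finset.mem_union_left _ (Finset.mem_image.mpr ⟨s, Finset.mem_univ s, rfl⟩)))⟩

lemma xeh_low_mem (i : Fin m) (s : Fin 3) :
    (((i, (s.castLE (by omega) : Fin 5)), Sum.inr (Sum.inl i)) : XA m × XH K m gk) ∈
      xE K m gk trip :=
  Finset.mem_biUnion.mpr ⟨i, Finset.mem_univ i, Finset.mem_union_left _ (Finset.mem_union_left _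
    (Finset.mem_union_right _ (Finset.mem_image.mpr ⟨s, Finset.mem_univ s, rfl⟩)))⟩

lemma xeh_mem (i : Fin m) :
    (((i, (3 : Fin 5)), Sum.inr (Sum.inl i)) : XA m × XH K m gk) ∈ xE K m gk trip :=
  Finset.mem_biUnion.mpr ⟨i, Finset.mem_univ i, Finset.mem_union_left _
    (Finset.mem_union_right _ (Finset.mem_insert_self _ _))⟩

lemma xeh'3_mem (i : Fin m) :
    (((i, (3 : Fin 5)), Sum.inr (Sum.inr (Sum.inl i))) : XA m × XH K m gk) ∈ xE K m gk trip :=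
  Finset.mem_biUnion.mpr ⟨i, Finset.mem_univ i, Finset.mem_union_left _
    (Finset.mem_union_right _ (Finset.mem_insert_of_mem (Finset.mem_insert_self _ _)))⟩

lemma xeh'4_mem (i : Fin m) :
    (((i, (4 : Fin 5)), Sum.inr (Sum.inr (Sum.inl i))) : XA m × XH K m gk) ∈ xE K m gk trip :=
  Finset.mem_biUnion.mpr ⟨i, Finset.mem_univ i, Finset.mem_union_left _
    (Finset.mem_union_right _ (Finset.mem_insert_of_mem (Finset.mem_insert_of_mem
      (Finset.mem_singleton_self _))))⟩

lemma xeg_mem (i : Fin m) (t : Fin gk) :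
    (((i, (4 : Fin 5)), Sum.inr (Sum.inr (Sum.inr t))) : XA m × XH K m gk) ∈ xE K m gk trip :=
  Finset.mem_biUnion.mpr ⟨i, Finset.mem_univ i, Finset.mem_union_right _
    (Finset.mem_image.mpr ⟨t, Finset.mem_univ t, rfl⟩)⟩

lemma xev_mem' (i : Fin m) (c : Fin 5) (hc : c.val ≤ 2) :
    (((i, c), Sum.inl (trip i ⟨c.val % 3, by omega⟩)) : XA m × XH K m gk) ∈ xE K m gk trip := by
  have hce : ((⟨c.val % 3, by omega⟩ : Fin 3).castLE (by omega) : Fin 5) = c := by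
    ext; simp only [Fin.castLE]; omega
  refine Finset.mem_biUnion.mpr ⟨i, Finset.mem_univ i, Finset.mem_union_left _
    (Finset.mem_union_left _ (Finset.mem_union_left _ (Finset.mem_image.mpr
      ⟨⟨c.val % 3, by omega⟩, Finset.mem_univ _, ?_⟩)))⟩
  exact congrArg (fun x => (((i, x), Sum.inl (trip i ⟨c.val % 3, by omega⟩)) : XA m × XH K m gk)) hce

lemma xM_subset_xE : xM K m trip J σ ⊆ xE K m (gnum K m) trip := by
  intro e he
  obtain ⟨⟨i, c⟩, h⟩ := e
  rcases xM_shape he with ⟨hc, _, hh⟩ | ⟨hc, hh | hh⟩ | ⟨hc, _, hh⟩ <;> simp only at hc hh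
  · rw [hh]; exact xev_mem' i c hc
  · subst hc; rw [hh]; exact xeh_mem i
  · subst hc; rw [hh]; exact xeh'3_mem i
  · subst hc; rw [hh]; exact xeg_mem i (σ i)

end Aux5
section Aux6
open Finset
set_option linter.unusedSectionVars false

variable {K : Type*} [Fintype K] [DecidableEq K] {m : ℕ} {trip : Fin m → Fin 3 → K}
  {J : Finset (Fin m)} {σ : Fin m → Fin (gnum K m)}

lemma xmv_mem' {i : Fin m} (hj : i ∈ J) (c : Fin 5) (hc : c.val ≤ 2) :
    (((i, c), Sum.inl (trip i ⟨c.val % 3, by omega⟩)) : XA m × XH K m (gnum K m)) ∈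
      xM K m trip J σ := by
  have hce : ((⟨c.val % 3, by omega⟩ : Fin 3).castLE (by omega) : Fin 5) = c := by
    ext; simp only [Fin.castLE]; omega
  refine Finset.mem_union_left _ (Finset.mem_union_left _ (Finset.mem_biUnion.mpr
    ⟨i, hj, Finset.mem_image.mpr ⟨⟨c.val % 3, by omega⟩, Finset.mem_univ _, ?_⟩⟩))
  exact congrArg
    (fun x => (((i, x), Sum.inl (trip i ⟨c.val % 3, by omega⟩)) : XA m × XH K m (gnum K m))) hce

lemma card_J (htrip : ∀ i : Fin m, Function.Injective (trip i)) (hJ : IsX3C m trip J) :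
    3 * J.card = Fintype.card K := by
  have : (J ×ˢ (Finset.univ : Finset (Fin 3))).card = (Finset.univ : Finset K).card := by
    apply Finset.card_bij (fun p _ => trip p.1 p.2)
    · intro p hp; exact Finset.mem_univ _
    · intro p hp q hq heq
      simp only [Finset.mem_product] at hp hq
      obtain ⟨j, hj, hun⟩ := hJ (trip p.1 p.2)
      have h1 : p.1 = j := hun p.1 ⟨hp.1, p.2, rfl⟩
      have h2 : q.1 = j := hun q.1 ⟨hq.1, q.2, heq.symm⟩
      have h3 : p.1 = q.1 := h1.trans h2.symm
      have h4 : p.2 = q.2 := htrip p.1 (by rw [heq, h3])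
      exact Prod.ext h3 h4
    · intro x _
      obtain ⟨j, ⟨hj, s, hs⟩, _⟩ := hJ x
      exact ⟨(j, s), Finset.mem_product.mpr ⟨hj, Finset.mem_univ _⟩, hs⟩
  rw [Finset.card_product] at this
  simp only [Finset.card_univ, Fintype.card_fin] at this
  omega

lemma xM_edge_of_v {e : XA m × XH K m (gnum K m)} (he : e ∈ xM K m trip J σ) {x : K}
    (hx : e.2 = Sum.inl x) :
    e.1.2.val ≤ 2 ∧ e.1.1 ∈ J ∧ trip e.1.1 ⟨e.1.2.val % 3, by omega⟩ = x := by
  rcases xM_shape he with ⟨hc, hiJ, hh⟩ | ⟨hc, hh | hh⟩ | ⟨hc, hiJ, hh⟩ <;>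
    rw [hx] at hh <;> simp at hh
  exact ⟨hc, hiJ, hh.symm⟩

lemma xM_edge_of_h {e : XA m × XH K m (gnum K m)} (he : e ∈ xM K m trip J σ) {i : Fin m}
    (hx : e.2 = Sum.inr (Sum.inl i)) : e = ((i, (3 : Fin 5)), Sum.inr (Sum.inl i)) := by
  rcases xM_shape he with ⟨hc, hiJ, hh⟩ | ⟨hc, hh | hh⟩ | ⟨hc, hiJ, hh⟩ <;>
    rw [hx] at hh <;> simp at hh
  have he1 : e.1 = (i, (3 : Fin 5)) := Prod.ext hh.symm hc
  calc e = (e.1, e.2) := rfl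
    _ = ((i, (3 : Fin 5)), Sum.inr (Sum.inl i)) := by rw [he1, hx]

lemma xM_edge_of_h' {e : XA m × XH K m (gnum K m)} (he : e ∈ xM K m trip J σ) {i : Fin m}
    (hx : e.2 = Sum.inr (Sum.inr (Sum.inl i))) :
    e = ((i, (3 : Fin 5)), Sum.inr (Sum.inr (Sum.inl i))) := by
  rcases xM_shape he with ⟨hc, hiJ, hh⟩ | ⟨hc, hh | hh⟩ | ⟨hc, hiJ, hh⟩ <;>
    rw [hx] at hh <;> simp at hh
  have he1 : e.1 = (i, (3 : Fin 5)) := Prod.ext hh.symm hc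
  calc e = (e.1, e.2) := rfl
    _ = _ := by rw [he1, hx]

lemma xM_edge_of_g {e : XA m × XH K m (gnum K m)} (he : e ∈ xM K m trip J σ)
    {t : Fin (gnum K m)} (hx : e.2 = Sum.inr (Sum.inr (Sum.inr t))) :
    e.1.2 = 4 ∧ e.1.1 ∉ J ∧ σ e.1.1 = t := by
  rcases xM_shape he with ⟨hc, hiJ, hh⟩ | ⟨hc, hh | hh⟩ | ⟨hc, hiJ, hh⟩ <;>
    rw [hx] at hh <;> simp at hh
  exact ⟨hc, hiJ, hh.symm⟩

lemma xM_hdeg_le (htrip : ∀ i : Fin m, Function.Injective (trip i)) (hJ : IsX3C m trip J)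
    (hσinj : Set.InjOn σ {i : Fin m | i ∉ J}) (h0 : XH K m (gnum K m)) :
    hdeg (xM K m trip J σ) h0 ≤ 1 := by
  apply hdeg_le_one
  intro e he he2 e' he' he2'
  rcases h0 with x | i | i | t
  · obtain ⟨hc, hiJ, hh⟩ := xM_edge_of_v he he2
    obtain ⟨hc', hiJ', hh'⟩ := xM_edge_of_v he' he2'
    obtain ⟨j, hj, hun⟩ := hJ x
    have h1 : e.1.1 = j := hun e.1.1 ⟨hiJ, _, hh⟩
    have h2 : e'.1.1 = j := hun e'.1.1 ⟨hiJ', _, hh'⟩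
    have h3 : e.1.1 = e'.1.1 := h1.trans h2.symm
    have h4 : e.1.2 = e'.1.2 := by
      have ht : trip e.1.1 ⟨e.1.2.val % 3, by omega⟩ =
          trip e.1.1 ⟨e'.1.2.val % 3, by omega⟩ := by rw [hh]; rw [h3, hh']
      have hv := congrArg Fin.val (htrip e.1.1 ht)
      simp only at hv
      ext; omega
    have he1 : e.1 = e'.1 := Prod.ext h3 h4
    calc e = (e.1, e.2) := rfl
      _ = (e'.1, e'.2) := by rw [he1, he2, he2']
      _ = e' := rfl
  · rw [xM_edge_of_h he he2, xM_edge_of_h he' he2']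
  · rw [xM_edge_of_h' he he2, xM_edge_of_h' he' he2']
  · obtain ⟨hc, hiJ, hh⟩ := xM_edge_of_g he he2
    obtain ⟨hc', hiJ', hh'⟩ := xM_edge_of_g he' he2'
    have h3 : e.1.1 = e'.1.1 := hσinj hiJ hiJ' (hh.trans hh'.symm)
    have he1 : e.1 = e'.1 := Prod.ext h3 (hc.trans hc'.symm)
    calc e = (e.1, e.2) := rfl
      _ = (e'.1, e'.2) := by rw [he1, he2, he2']
      _ = e' := rfl

end Aux6
section Aux7
open Finset
set_option linter.unusedSectionVars false

variable {K : Type*} [Fintype K] [DecidableEq K] {m : ℕ} {trip : Fin m → Fin 3 → K}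
  {J : Finset (Fin m)} {σ : Fin m → Fin (gnum K m)}

lemma fin5_ne3 {c : Fin 5} (hc : c.val ≤ 2) : c ≠ 3 := by
  intro h; subst h; simp [fin5_3_val] at hc

lemma adegM_low {i : Fin m} {c : Fin 5} (hc : c.val ≤ 2) :
    adeg (xM K m trip J σ) (i, c) ≤ 1 := by
  apply adeg_le_one (((i, c), Sum.inl (trip i ⟨c.val % 3, by omega⟩)) : XA m × XH K m (gnum K m))
  intro e he h1
  rcases xM_shape he with ⟨_, _, hh⟩ | ⟨hc', _⟩ | ⟨hc', _, _⟩
  · simp only [h1] at hh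
    calc e = (e.1, e.2) := rfl
      _ = _ := by rw [h1, hh]
  · rw [h1] at hc'; exact absurd hc' (fin5_ne3 hc)
  · rw [h1] at hc'
    exact absurd (congrArg Fin.val hc') (by simp [fin5_4_val]; omega)

lemma adegM_low_zero {i : Fin m} {c : Fin 5} (hi : i ∉ J) (hc : c.val ≤ 2) :
    adeg (xM K m trip J σ) (i, c) = 0 := by
  apply adeg_eq_zero
  intro e he h1
  rcases xM_shape he with ⟨_, hiJ, _⟩ | ⟨hc', _⟩ | ⟨hc', _, _⟩
  · rw [h1] at hiJ; exact hi hiJ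
  · rw [h1] at hc'; exact fin5_ne3 hc hc'
  · rw [h1] at hc'
    exact absurd (congrArg Fin.val hc') (by simp [fin5_4_val]; omega)

lemma adegM_3 (i : Fin m) : adeg (xM K m trip J σ) (i, (3 : Fin 5)) ≤ 2 := by
  apply adeg_le_two (((i, (3:Fin 5)), Sum.inr (Sum.inl i)) : XA m × XH K m (gnum K m))
    (((i, (3:Fin 5)), Sum.inr (Sum.inr (Sum.inl i))) : XA m × XH K m (gnum K m))
  intro e he h1
  rcases xM_shape he with ⟨hc', _, _⟩ | ⟨_, hh | hh⟩ | ⟨hc', _, _⟩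
  · rw [h1] at hc'; simp [fin5_3_val] at hc'
  · left
    calc e = (e.1, e.2) := rfl
      _ = _ := by rw [h1, hh, h1]
  · right
    calc e = (e.1, e.2) := rfl
      _ = _ := by rw [h1, hh, h1]
  · rw [h1] at hc'; exact absurd (congrArg Fin.val hc') (by simp [fin5_3_val, fin5_4_val])

lemma adegM_4 (i : Fin m) : adeg (xM K m trip J σ) (i, (4 : Fin 5)) ≤ 1 := by
  apply adeg_le_one (((i, (4:Fin 5)), Sum.inr (Sum.inr (Sum.inr (σ i)))) : XA m × XH K m (gnum K m))
  intro e he h1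
  rcases xM_shape he with ⟨hc', _, _⟩ | ⟨hc', _⟩ | ⟨_, _, hh⟩
  · rw [h1] at hc'; simp [fin5_4_val] at hc'
  · rw [h1] at hc'; exact absurd (congrArg Fin.val hc') (by simp [fin5_3_val, fin5_4_val])
  · calc e = (e.1, e.2) := rfl
      _ = _ := by rw [h1, hh, h1]

lemma adegM_4_zero {i : Fin m} (hi : i ∈ J) : adeg (xM K m trip J σ) (i, (4 : Fin 5)) = 0 := by
  apply adeg_eq_zero
  intro e he h1
  rcases xM_shape he with ⟨hc', _, _⟩ | ⟨hc', _⟩ | ⟨_, hiJ, _⟩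
  · rw [h1] at hc'; simp [fin5_4_val] at hc'
  · rw [h1] at hc'; exact absurd (congrArg Fin.val hc') (by simp [fin5_3_val, fin5_4_val])
  · rw [h1] at hiJ; exact hiJ hi

lemma rk_v (a : XA m) (x : K) : xRk K m (gnum K m) (a, Sum.inl x) = 1 := rfl
lemma rk_h3 (i i' : Fin m) :
    xRk K m (gnum K m) ((i, (3:Fin 5)), Sum.inr (Sum.inl i')) = 1 := by simp [xRk]
lemma rk_h' (a : XA m) (i' : Fin m) :
    xRk K m (gnum K m) (a, Sum.inr (Sum.inr (Sum.inl i'))) = 2 := rfl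
lemma rk_g (a : XA m) (t : Fin (gnum K m)) :
    xRk K m (gnum K m) (a, Sum.inr (Sum.inr (Sum.inr t))) = 1 := rfl

lemma cntM1_low_pos {i : Fin m} (hj : i ∈ J) {c : Fin 5} (hc : c.val ≤ 2) :
    0 < cnt (xRk K m (gnum K m)) (xM K m trip J σ) (i, c) 1 :=
  cnt_pos_iff.mpr ⟨_, xmv_mem' hj c hc, rfl, rk_v _ _⟩

lemma cntM1_3 (i : Fin m) :
    cnt (xRk K m (gnum K m)) (xM K m trip J σ) (i, (3 : Fin 5)) 1 = 1 := by
  refine le_antisymm ?_ (cnt_pos_iff.mpr ⟨_, mh_mem i, rfl, rk_h3 i i⟩)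
  apply cnt_le_one (((i, (3:Fin 5)), Sum.inr (Sum.inl i)) : XA m × XH K m (gnum K m))
  intro e he h1 hr
  rcases xM_shape he with ⟨hc', _, _⟩ | ⟨_, hh | hh⟩ | ⟨hc', _, _⟩
  · rw [h1] at hc'; simp [fin5_3_val] at hc'
  · calc e = (e.1, e.2) := rfl
      _ = _ := by rw [h1, hh, h1]
  · exfalso
    have : xRk K m (gnum K m) (e.1, e.2) = 2 := by rw [h1, hh, h1]; exact rk_h' _ _
    rw [show (e.1, e.2) = e from rfl, hr] at this
    omega
  · rw [h1] at hc'; exact absurd (congrArg Fin.val hc') (by simp [fin5_3_val, fin5_4_val])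

lemma cntM2_3_pos (i : Fin m) :
    0 < cnt (xRk K m (gnum K m)) (xM K m trip J σ) (i, (3 : Fin 5)) 2 :=
  cnt_pos_iff.mpr ⟨_, mh'_mem i, rfl, rk_h' _ _⟩

lemma cntM1_4_pos {i : Fin m} (hi : i ∉ J) :
    0 < cnt (xRk K m (gnum K m)) (xM K m trip J σ) (i, (4 : Fin 5)) 1 :=
  cnt_pos_iff.mpr ⟨_, mg_mem hi, rfl, rk_g _ _⟩

end Aux7
section Aux8
open Finset
set_option linter.unusedSectionVars false

lemma natcard_filter {α : Type*} [Fintype α] (P : α → Prop) [DecidablePred P] :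
    Nat.card {a // P a} = (Finset.univ.filter P).card := by
  rw [Nat.card_eq_fintype_card, Fintype.card_subtype]

lemma cnt_eq_zero {A H : Type*} [DecidableEq A] [DecidableEq H] {rk : A × H → ℕ}
    {X : Finset (A × H)} {a : A} {r : ℕ} (h : ∀ e ∈ X, e.1 = a → rk e = r → False) :
    cnt rk X a r = 0 := by
  rw [cnt, Finset.card_eq_zero, Finset.filter_eq_empty_iff]
  rintro e he ⟨h1, h2⟩
  exact h e he h1 h2

lemma fin5_cases (c : Fin 5) : c.val ≤ 2 ∨ c = 3 ∨ c = 4 := by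
  rcases c with ⟨v, hv⟩
  by_cases h : v ≤ 2
  · exact Or.inl h
  · by_cases h4 : v = 3
    · exact Or.inr (Or.inl (by ext; simp [h4, fin5_3_val]))
    · exact Or.inr (Or.inr (by ext; simp [fin5_4_val]; omega))

variable {K : Type*} [Fintype K] [DecidableEq K] {m gk : ℕ} {trip : Fin m → Fin 3 → K}

lemma cntE1_le_low {X : Finset (XA m × XH K m gk)} (hX : X ⊆ xE K m gk trip) (i : Fin m)
    {c : Fin 5} (hc : c.val ≤ 2) : cnt (xRk K m gk) X (i, c) 1 ≤ 1 := by
  apply cnt_le_one (((i, c), Sum.inl (trip i ⟨c.val % 3, by omega⟩)) : XA m × XH K m gk)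
  intro e he h1 hr
  obtain ⟨a, h⟩ := e
  subst h1
  have h2 := eA (hX he) hc hr
  exact congrArg _ h2

lemma cntE2_le_low {X : Finset (XA m × XH K m gk)} (hX : X ⊆ xE K m gk trip) (i : Fin m)
    {c : Fin 5} (hc : c.val ≤ 2) : cnt (xRk K m gk) X (i, c) 2 ≤ 1 := by
  apply cnt_le_one (((i, c), Sum.inr (Sum.inl i)) : XA m × XH K m gk)
  intro e he h1 hr
  obtain ⟨a, h⟩ := e
  subst h1
  exact congrArg _ (eB (hX he) hc hr)

lemma cntE1_le_3 {X : Finset (XA m × XH K m gk)} (hX : X ⊆ xE K m gk trip) (i : Fin m) :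
    cnt (xRk K m gk) X (i, (3 : Fin 5)) 1 ≤ 1 := by
  apply cnt_le_one (((i, (3 : Fin 5)), Sum.inr (Sum.inl i)) : XA m × XH K m gk)
  intro e he h1 hr
  obtain ⟨a, h⟩ := e
  subst h1
  exact congrArg _ (eC1 (hX he) rfl hr)

lemma cntE2_le_3 {X : Finset (XA m × XH K m gk)} (hX : X ⊆ xE K m gk trip) (i : Fin m) :
    cnt (xRk K m gk) X (i, (3 : Fin 5)) 2 ≤ 1 := by
  apply cnt_le_one (((i, (3 : Fin 5)), Sum.inr (Sum.inr (Sum.inl i))) : XA m × XH K m gk)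
  intro e he h1 hr
  obtain ⟨a, h⟩ := e
  subst h1
  exact congrArg _ (eC2 (hX he) rfl hr)

end Aux8

/-- If `J` is an exact 3-cover of `K`, then the b-matching `xM` built
from `J` (matching, for `j ∈ J`, the agents `a_{j_1}, a_{j_2}, a_{j_3}` to the elements
of `T_j`; matching every `a_{i_4}` to both `h_i` and `h'_i`; and matching `a_{i_5}` for
`i ∉ J` to the house `g_{σ i}`, `σ` being a bijection from the complement of `J` onto
the `g`-houses) is a popular b-matching of the constructed instance. -/
theorem x3c_cover_gives_popular
    {K : Type*} [Fintype K] [DecidableEq K] (m : ℕ) (trip : Fin m → Fin 3 → K)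
    (htrip : ∀ i : Fin m, Function.Injective (trip i))
    (h3 : 3 ∣ Fintype.card K)
    (J : Finset (Fin m)) (hJ : IsX3C m trip J)
    (σ : Fin m → Fin (gnum K m))
    (hσ : Set.BijOn σ {i : Fin m | i ∉ J} Set.univ) :
    Popular (xE K m (gnum K m) trip) (xbA m) (xbH K m (gnum K m)) (xRk K m (gnum K m))
      (xM K m trip J σ) := by
  classical
  have hσinj : Set.InjOn σ {i : Fin m | i ∉ J} := hσ.injOn
  constructor
  · -- xM is a b-matching
    refine ⟨xM_subset_xE, ?_, ?_⟩
    · rintro ⟨i, c⟩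
      rcases fin5_cases c with hc | hc | hc
      · refine le_trans (adegM_low hc) ?_
        simp only [xbA]
        split <;> omega
      · subst hc
        simpa [xbA] using adegM_3 (σ := σ) (trip := trip) (J := J) i
      · subst hc
        refine le_trans (adegM_4 i) ?_
        simp [xbA]
    · intro h
      exact xM_hdeg_le htrip hJ hσinj h
  · -- popularity
    intro M' hM'
    obtain ⟨hE', hA', hH'⟩ := hM'
    intro hlt
    unfold MorePop at hlt
    rw [natcard_filter, natcard_filter] at hlt
    -- basic bounds on M'
    have hadeg1 : ∀ a : XA m, a.2 ≠ 3 → adeg M' a ≤ 1 := by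
      intro a h
      have := hA' a
      simpa [xbA, h] using this
    have hsum : ∀ a : XA m, cnt (xRk K m (gnum K m)) M' a 1 + cnt (xRk K m (gnum K m)) M' a 2 ≤ adeg M' a := fun a => cnt12_le_adeg (xRk K m (gnum K m)) M' a
    have hc1le : ∀ a : XA m, cnt (xRk K m (gnum K m)) M' a 1 ≤ adeg M' a := fun a => cnt_le_adeg (xRk K m (gnum K m)) M' a 1
    -- held-house extraction
    have heldv : ∀ a : XA m, a.2.val ≤ 2 → 1 ≤ cnt (xRk K m (gnum K m)) M' a 1 →
        (a, (Sum.inl (trip a.1 ⟨a.2.val % 3, by omega⟩) : XH K m (gnum K m))) ∈ M' := by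
      intro a hac h
      obtain ⟨e, he, h1, hr⟩ := cnt_pos_iff.mp h
      obtain ⟨b, hh⟩ := e
      subst h1
      have h2 := eA (hE' he) hac hr
      exact h2 ▸ he
    have heldh : ∀ a : XA m, a.2.val ≤ 2 → 1 ≤ cnt (xRk K m (gnum K m)) M' a 2 →
        (a, (Sum.inr (Sum.inl a.1) : XH K m (gnum K m))) ∈ M' := by
      intro a hac h
      obtain ⟨e, he, h1, hr⟩ := cnt_pos_iff.mp h
      obtain ⟨b, hh⟩ := e
      subst h1
      have h2 := eB (hE' he) hac hr
      exact h2 ▸ he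
    have heldh'4 : ∀ a : XA m, a.2 = 4 → 1 ≤ cnt (xRk K m (gnum K m)) M' a 2 →
        (a, (Sum.inr (Sum.inr (Sum.inl a.1)) : XH K m (gnum K m))) ∈ M' := by
      intro a hac h
      obtain ⟨e, he, h1, hr⟩ := cnt_pos_iff.mp h
      obtain ⟨b, hh⟩ := e
      subst h1
      have h2 := eD2 (hE' he) hac hr
      exact h2 ▸ he
    -- the choice function for the exact-3-cover occupant
    have hex : ∀ a : XA m, ∃ b : XA m,
        b.1 ∈ J ∧ b.2.val ≤ 2 ∧
        trip b.1 ⟨b.2.val % 3, by omega⟩ = trip a.1 ⟨a.2.val % 3, by omega⟩ ∧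
        ∀ j ∈ J, ∀ s : Fin 3, trip j s = trip a.1 ⟨a.2.val % 3, by omega⟩ → j = b.1 := by
      intro a
      obtain ⟨j, ⟨hj, s, hs⟩, hun⟩ := hJ (trip a.1 ⟨a.2.val % 3, by omega⟩)
      refine ⟨(j, (s.castLE (by omega) : Fin 5)), hj, ?_, ?_, ?_⟩
      · have := s.isLt
        simp only [Fin.castLE]
        omega
      · have h3 : (⟨((s.castLE (by omega : (3:ℕ) ≤ 5) : Fin 5)).val % 3,
            by omega⟩ : Fin 3) = s := by
          have := s.isLt
          ext
          simp only [Fin.castLE]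
          omega
        simp only at h3 ⊢
        rw [h3]
        exact hs
      · intro j' hj' s' hts
        exact hun j' ⟨hj', s', hts⟩
    choose f1 hf1 using hex
    -- the gainer/loser sets
    set G1 := Finset.univ.filter (fun a : XA m => a.1 ∉ J ∧ a.2.val ≤ 2 ∧ 1 ≤ cnt (xRk K m (gnum K m)) M' a 1) with hG1def
    set G2 := Finset.univ.filter
      (fun a : XA m => a.1 ∉ J ∧ a.2.val ≤ 2 ∧ cnt (xRk K m (gnum K m)) M' a 1 = 0 ∧ 1 ≤ cnt (xRk K m (gnum K m)) M' a 2) with hG2def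
    set G3 := Finset.univ.filter (fun a : XA m => a.1 ∈ J ∧ a.2 = 4 ∧ 1 ≤ cnt (xRk K m (gnum K m)) M' a 1) with hG3def
    set G4 := Finset.univ.filter
      (fun a : XA m => a.1 ∈ J ∧ a.2 = 4 ∧ cnt (xRk K m (gnum K m)) M' a 1 = 0 ∧ 1 ≤ cnt (xRk K m (gnum K m)) M' a 2) with hG4def
    set HN := Finset.univ.filter (fun a : XA m => a.1 ∉ J ∧ a.2 = 4 ∧ 1 ≤ cnt (xRk K m (gnum K m)) M' a 1) with hHNdef
    set L1 := Finset.univ.filter (fun a : XA m => a.1 ∈ J ∧ a.2.val ≤ 2 ∧ cnt (xRk K m (gnum K m)) M' a 1 = 0) with hL1def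
    set L2 := Finset.univ.filter
      (fun a : XA m => a.2 = 3 ∧ (cnt (xRk K m (gnum K m)) M' a 1 = 0 ∨ cnt (xRk K m (gnum K m)) M' a 2 = 0)) with hL2def
    set L3 := Finset.univ.filter (fun a : XA m => a.1 ∉ J ∧ a.2 = 4 ∧ cnt (xRk K m (gnum K m)) M' a 1 = 0) with hL3def
    -- step 1 : gainers are contained in G1 ∪ G2 ∪ G3 ∪ G4
    have hPfsub : Finset.univ.filter (Prefers (xRk K m (gnum K m)) M' (xM K m trip J σ)) ⊆ G1 ∪ G2 ∪ G3 ∪ G4 := by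
      intro a ha
      rw [Finset.mem_filter] at ha
      have hpref := (xprefers_iff M' (xM K m trip J σ) a).mp ha.2
      obtain ⟨i, c⟩ := a
      simp only [Finset.mem_union, hG1def, hG2def, hG3def, hG4def, Finset.mem_filter,
        Finset.mem_univ, true_and]
      rcases fin5_cases c with hc | hc | hc
      · by_cases hij : i ∈ J
        · exfalso
          have h1 : 1 ≤ cnt (xRk K m (gnum K m)) (xM K m trip J σ) (i, c) 1 := cntM1_low_pos hij hc
          have h2 : cnt (xRk K m (gnum K m)) M' (i, c) 1 + cnt (xRk K m (gnum K m)) M' (i, c) 2 ≤ 1 :=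
            le_trans (hsum (i, c)) (hadeg1 (i, c) (fin5_ne3 hc))
          omega
        · have hz : adeg (xM K m trip J σ) (i, c) = 0 := adegM_low_zero hij hc
          have hz1 : cnt (xRk K m (gnum K m)) (xM K m trip J σ) (i, c) 1 = 0 := by
            have := cnt_le_adeg (xRk K m (gnum K m)) (xM K m trip J σ) (i, c) 1; omega
          have hz2 : cnt (xRk K m (gnum K m)) (xM K m trip J σ) (i, c) 2 = 0 := by
            have := cnt_le_adeg (xRk K m (gnum K m)) (xM K m trip J σ) (i, c) 2; omega
          rcases hpref with h | ⟨heq, h⟩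
          · exact Or.inl (Or.inl (Or.inl ⟨hij, hc, by omega⟩))
          · exact Or.inl (Or.inl (Or.inr ⟨hij, hc, by omega, by omega⟩))
      · exfalso
        subst hc
        have h1 : cnt (xRk K m (gnum K m)) (xM K m trip J σ) (i, (3 : Fin 5)) 1 = 1 := cntM1_3 i
        have h2 : 1 ≤ cnt (xRk K m (gnum K m)) (xM K m trip J σ) (i, (3 : Fin 5)) 2 := cntM2_3_pos i
        have h3 : cnt (xRk K m (gnum K m)) M' (i, (3 : Fin 5)) 1 ≤ 1 := cntE1_le_3 hE' i
        have h4 : cnt (xRk K m (gnum K m)) M' (i, (3 : Fin 5)) 2 ≤ 1 := cntE2_le_3 hE' i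
        omega
      · subst hc
        by_cases hij : i ∈ J
        · have hz : adeg (xM K m trip J σ) (i, (4 : Fin 5)) = 0 := adegM_4_zero hij
          have hz1 : cnt (xRk K m (gnum K m)) (xM K m trip J σ) (i, (4 : Fin 5)) 1 = 0 := by
            have := cnt_le_adeg (xRk K m (gnum K m)) (xM K m trip J σ) (i, (4 : Fin 5)) 1; omega
          have hz2 : cnt (xRk K m (gnum K m)) (xM K m trip J σ) (i, (4 : Fin 5)) 2 = 0 := by
            have := cnt_le_adeg (xRk K m (gnum K m)) (xM K m trip J σ) (i, (4 : Fin 5)) 2; omega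
          rcases hpref with h | ⟨heq, h⟩
          · exact Or.inl (Or.inr ⟨hij, rfl, by omega⟩)
          · exact Or.inr ⟨hij, rfl, by omega, by omega⟩
        · exfalso
          have h1 : 1 ≤ cnt (xRk K m (gnum K m)) (xM K m trip J σ) (i, (4 : Fin 5)) 1 := cntM1_4_pos hij
          have h2 : cnt (xRk K m (gnum K m)) M' (i, (4 : Fin 5)) 1 + cnt (xRk K m (gnum K m)) M' (i, (4 : Fin 5)) 2 ≤ 1 :=
            le_trans (hsum (i, (4 : Fin 5))) (hadeg1 (i, (4 : Fin 5)) (by intro hx; simp [Fin.ext_iff, fin5_4_val, fin5_3_val] at hx))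
          omega
    -- step 2 : losers all prefer M
    have hL1sub : L1 ⊆ Finset.univ.filter (Prefers (xRk K m (gnum K m)) (xM K m trip J σ) M') := by
      intro a ha
      rw [hL1def, Finset.mem_filter] at ha
      obtain ⟨-, hj, hc, h0⟩ := ha
      rw [Finset.mem_filter]
      refine ⟨Finset.mem_univ a, (xprefers_iff (xM K m trip J σ) M' a).mpr ?_⟩
      have h1 : 1 ≤ cnt (xRk K m (gnum K m)) (xM K m trip J σ) a 1 := cntM1_low_pos hj hc
      left; omega
    have hL2sub : L2 ⊆ Finset.univ.filter (Prefers (xRk K m (gnum K m)) (xM K m trip J σ) M') := by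
      intro a ha
      rw [hL2def, Finset.mem_filter] at ha
      obtain ⟨-, hc, h0⟩ := ha
      rw [Finset.mem_filter]
      refine ⟨Finset.mem_univ a, (xprefers_iff (xM K m trip J σ) M' a).mpr ?_⟩
      obtain ⟨i, c⟩ := a
      simp only at hc
      subst hc
      have h1 : cnt (xRk K m (gnum K m)) (xM K m trip J σ) (i, (3 : Fin 5)) 1 = 1 := cntM1_3 i
      have h2 : 1 ≤ cnt (xRk K m (gnum K m)) (xM K m trip J σ) (i, (3 : Fin 5)) 2 := cntM2_3_pos i
      have h3 : cnt (xRk K m (gnum K m)) M' (i, (3 : Fin 5)) 1 ≤ 1 := cntE1_le_3 hE' i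
      have h4 : cnt (xRk K m (gnum K m)) M' (i, (3 : Fin 5)) 2 ≤ 1 := cntE2_le_3 hE' i
      omega
    have hL3sub : L3 ⊆ Finset.univ.filter (Prefers (xRk K m (gnum K m)) (xM K m trip J σ) M') := by
      intro a ha
      rw [hL3def, Finset.mem_filter] at ha
      obtain ⟨-, hj, hc, h0⟩ := ha
      rw [Finset.mem_filter]
      refine ⟨Finset.mem_univ a, (xprefers_iff (xM K m trip J σ) M' a).mpr ?_⟩
      obtain ⟨i, c⟩ := a
      simp only at hc
      subst hc
      have h1 : 1 ≤ cnt (xRk K m (gnum K m)) (xM K m trip J σ) (i, (4 : Fin 5)) 1 := cntM1_4_pos hj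
      left; omega
    -- step 3 : |G1| ≤ |L1|
    have hG1L1 : G1.card ≤ L1.card := by
      apply Finset.card_le_card_of_injOn f1
      · intro a ha
        rw [hG1def, Finset.mem_coe, Finset.mem_filter] at ha
        obtain ⟨-, haJ, hac, hc1a⟩ := ha
        obtain ⟨hfJ, hfc, hft, hfu⟩ := hf1 a
        rw [hL1def, Finset.mem_coe, Finset.mem_filter]
        refine ⟨Finset.mem_univ _, hfJ, hfc, ?_⟩
        by_contra hne
        have hpos : 1 ≤ cnt (xRk K m (gnum K m)) M' (f1 a) 1 := by omega
        have he1 := heldv a hac hc1a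
        have he2 := heldv (f1 a) hfc hpos
        rw [hft] at he2
        have := edge_unique_of_hdeg hH' he2 he1 rfl
        have : (f1 a).1 = a.1 := congrArg (fun e => (Prod.fst e).1) this
        rw [← this] at haJ
        exact haJ hfJ
      · intro a ha b hb hab
        simp only [Finset.coe_filter, Set.mem_setOf_eq, hG1def, Finset.mem_filter] at ha hb
        obtain ⟨-, haJ, hac, hc1a⟩ := ha
        obtain ⟨-, hbJ, hbc, hc1b⟩ := hb
        obtain ⟨hfJa, hfca, hfta, -⟩ := hf1 a
        obtain ⟨hfJb, hfcb, hftb, -⟩ := hf1 b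
        have he1 := heldv a hac hc1a
        have he2 := heldv b hbc hc1b
        have hxx : trip a.1 ⟨a.2.val % 3, by omega⟩ = trip b.1 ⟨b.2.val % 3, by omega⟩ := by
          rw [← hfta, ← hftb, hab]
        have := edge_unique_of_hdeg hH' he1 he2 (by exact congrArg Sum.inl hxx)
        have h1 : a.1 = b.1 := congrArg (fun e => (Prod.fst e).1) this
        have h2 : a.2 = b.2 := congrArg (fun e => (Prod.fst e).2) this
        exact Prod.ext h1 h2
    -- step 4 : |G2| + |G4| ≤ |L2|
    have hG24dis : Disjoint G2 G4 := by
      rw [Finset.disjoint_left]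
      intro a h2 h4
      rw [hG2def, Finset.mem_filter] at h2
      rw [hG4def, Finset.mem_filter] at h4
      exact h2.2.1 h4.2.1
    have hG24L2 : G2.card + G4.card ≤ L2.card := by
      rw [← Finset.card_union_of_disjoint hG24dis]
      apply Finset.card_le_card_of_injOn (fun a => ((a.1, (3 : Fin 5)) : XA m))
      · intro a ha
        rw [Finset.mem_coe, Finset.mem_union, hG2def, hG4def, Finset.mem_filter, Finset.mem_filter] at ha
        rw [hL2def, Finset.mem_coe, Finset.mem_filter]
        refine ⟨Finset.mem_univ _, rfl, ?_⟩
        rcases ha with ⟨-, haJ, hac, hz, hc2a⟩ | ⟨-, haJ, hac, hz, hc2a⟩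
        · -- holds h_{a.1}; so (a.1,3) has no rank-1 edge
          left
          have he1 := heldh a hac hc2a
          apply cnt_eq_zero
          intro e he h1 hr
          obtain ⟨b, hh⟩ := e
          subst h1
          have h2 := eC1 (hE' he) rfl hr
          have := edge_unique_of_hdeg hH' he he1 (by exact h2)
          have hcc : (3 : Fin 5) = a.2 := congrArg (fun e => (Prod.fst e).2) this
          rw [← hcc] at hac
          simp [fin5_3_val] at hac
        · -- holds h'_{a.1}
          right
          have he1 := heldh'4 a hac hc2a
          apply cnt_eq_zero
          intro e he h1 hr
          obtain ⟨b, hh⟩ := e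
          subst h1
          have h2 := eC2 (hE' he) rfl hr
          have := edge_unique_of_hdeg hH' he he1 (by exact h2)
          have hcc : (3 : Fin 5) = a.2 := congrArg (fun e => (Prod.fst e).2) this
          rw [hac] at hcc
          exact absurd (congrArg Fin.val hcc) (by decide)
      · intro a ha b hb hab
        simp only [Finset.coe_union, Set.mem_union, Finset.coe_filter, Set.mem_setOf_eq,
          hG2def, hG4def, Finset.mem_filter] at ha hb
        have hab' : ((a.1, (3 : Fin 5)) : XA m) = (b.1, (3 : Fin 5)) := hab
        have h1' := congrArg Prod.fst hab'
        have h1 : a.1 = b.1 := h1'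
        rcases ha with ⟨-, haJ, hac, hza, hc2a⟩ | ⟨-, haJ, hac, hza, hc2a⟩ <;>
          rcases hb with ⟨-, hbJ, hbc, hzb, hc2b⟩ | ⟨-, hbJ, hbc, hzb, hc2b⟩
        · have he1 := heldh a hac hc2a
          have he2 := heldh b hbc hc2b
          have := edge_unique_of_hdeg hH' he1 he2
            (by exact congrArg (fun i => (Sum.inr (Sum.inl i) : XH K m (gnum K m))) h1)
          exact Prod.ext (congrArg (fun e => (Prod.fst e).1) this)
            (congrArg (fun e => (Prod.fst e).2) this)
        · exact absurd (by rw [h1]; exact hbJ : a.1 ∈ J) haJ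
        · exact absurd (by rw [← h1]; exact haJ : b.1 ∈ J) hbJ
        · exact Prod.ext h1 (hac.trans hbc.symm)
    -- step 5 : |G3| ≤ |L3| by counting g-houses
    have hG3HN : Disjoint G3 HN := by
      rw [Finset.disjoint_left]
      intro a h3 hn
      rw [hG3def, Finset.mem_filter] at h3
      rw [hHNdef, Finset.mem_filter] at hn
      exact hn.2.1 h3.2.1
    set F := M'.filter (fun e => e.1.2 = (4 : Fin 5) ∧ (xRk K m (gnum K m)) e = 1) with hFdef
    have hFcard : F.card ≤ gnum K m := by
      have hinj : Set.InjOn Prod.snd (F : Set (XA m × XH K m (gnum K m))) := by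
        intro e he e' he' hee
        rw [Finset.mem_coe, hFdef, Finset.mem_filter] at he he'
        exact edge_unique_of_hdeg hH' he.1 he'.1 hee
      have h1 : F.card = (F.image Prod.snd).card := (Finset.card_image_of_injOn hinj).symm
      have h2 : F.image Prod.snd ⊆ Finset.univ.image
          (fun t : Fin (gnum K m) => (Sum.inr (Sum.inr (Sum.inr t)) : XH K m (gnum K m))) := by
        intro h hh
        rw [Finset.mem_image] at hh
        obtain ⟨e, he, heq⟩ := hh
        rw [hFdef, Finset.mem_filter] at he
        obtain ⟨he, hc4, hr⟩ := he
        obtain ⟨t, ht⟩ := eD1 (hE' he) hc4 hr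
        rw [Finset.mem_image]
        exact ⟨t, Finset.mem_univ t, by rw [← heq, ht]⟩
      calc F.card = (F.image Prod.snd).card := h1
        _ ≤ (Finset.univ.image
            (fun t : Fin (gnum K m) => (Sum.inr (Sum.inr (Sum.inr t)) : XH K m (gnum K m)))).card :=
          Finset.card_le_card h2
        _ ≤ (Finset.univ : Finset (Fin (gnum K m))).card := Finset.card_image_le
        _ = gnum K m := by simp
    have hG3HNF : (G3 ∪ HN).card ≤ F.card := by
      apply Finset.card_le_card_of_surjOn Prod.fst
      intro a ha
      rw [Finset.mem_coe, Finset.mem_union, hG3def, hHNdef, Finset.mem_filter,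
        Finset.mem_filter] at ha
      have hc4 : a.2 = 4 ∧ 1 ≤ cnt (xRk K m (gnum K m)) M' a 1 := by
        rcases ha with ⟨-, -, h, h'⟩ | ⟨-, -, h, h'⟩ <;> exact ⟨h, h'⟩
      obtain ⟨e, he, h1, hr⟩ := cnt_pos_iff.mp hc4.2
      refine ⟨e, ?_, h1⟩
      rw [Finset.mem_coe, hFdef, Finset.mem_filter]
      exact ⟨he, by rw [h1]; exact hc4.1, hr⟩
    have hP4 : L3.card + HN.card = m - J.card := by
      have hsplit : L3.card + HN.card =
          (Finset.univ.filter (fun a : XA m => a.1 ∉ J ∧ a.2 = 4)).card := by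
        have e1 : L3 = (Finset.univ.filter (fun a : XA m => a.1 ∉ J ∧ a.2 = 4)).filter
            (fun a => cnt (xRk K m (gnum K m)) M' a 1 = 0) := by
          rw [hL3def, Finset.filter_filter]
          apply Finset.filter_congr
          intro a _
          constructor
          · rintro ⟨h1, h2, h3⟩; exact ⟨⟨h1, h2⟩, h3⟩
          · rintro ⟨⟨h1, h2⟩, h3⟩; exact ⟨h1, h2, h3⟩
        have e2 : HN = (Finset.univ.filter (fun a : XA m => a.1 ∉ J ∧ a.2 = 4)).filter
            (fun a => ¬ (cnt (xRk K m (gnum K m)) M' a 1 = 0)) := by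
          rw [hHNdef, Finset.filter_filter]
          apply Finset.filter_congr
          intro a _
          constructor
          · rintro ⟨h1, h2, h3⟩; exact ⟨⟨h1, h2⟩, by omega⟩
          · rintro ⟨⟨h1, h2⟩, h3⟩; exact ⟨h1, h2, by omega⟩
        rw [e1, e2]
        exact Finset.card_filter_add_card_filter_not _
      rw [hsplit]
      have himg : Finset.univ.filter (fun a : XA m => a.1 ∉ J ∧ a.2 = 4) =
          (Finset.univ.filter (fun i : Fin m => i ∉ J)).image (fun i => ((i, 4) : XA m)) := by
        ext ⟨i, c⟩
        simp only [Finset.mem_filter, Finset.mem_univ, true_and, Finset.mem_image]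
        constructor
        · rintro ⟨h1, h2⟩; exact ⟨i, h1, by rw [h2]⟩
        · rintro ⟨j, hj, heq⟩
          have hji : j = i := congrArg Prod.fst heq
          have hc : (4 : Fin 5) = c := congrArg Prod.snd heq
          exact ⟨hji ▸ hj, hc.symm⟩
      rw [himg, Finset.card_image_of_injOn (fun x _ y _ h => congrArg Prod.fst h)]
      have : Finset.univ.filter (fun i : Fin m => i ∉ J) = Finset.univ \ J := by
        ext i; simp
      rw [this, Finset.card_sdiff_of_subset (Finset.subset_univ J)]
      simp
    have hgk : gnum K m = m - J.card := by
      have hcard := card_J htrip hJ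
      rw [gnum, ← hcard, Nat.mul_div_cancel_left _ (by norm_num)]
    have hG3L3 : G3.card ≤ L3.card := by
      have h1 : G3.card + HN.card = (G3 ∪ HN).card :=
        (Finset.card_union_of_disjoint hG3HN).symm
      omega
    -- step 6 : losers are disjoint
    have hd12 : Disjoint L1 L2 := by
      rw [Finset.disjoint_left]
      intro a h1 h2
      rw [hL1def, Finset.mem_filter] at h1
      rw [hL2def, Finset.mem_filter] at h2
      have := h1.2.2.1
      rw [h2.2.1] at this
      simp [fin5_3_val] at this
    have hd13 : Disjoint L1 L3 := by
      rw [Finset.disjoint_left]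
      intro a h1 h2
      rw [hL1def, Finset.mem_filter] at h1
      rw [hL3def, Finset.mem_filter] at h2
      exact h2.2.1 h1.2.1
    have hd23 : Disjoint L2 L3 := by
      rw [Finset.disjoint_left]
      intro a h1 h2
      rw [hL2def, Finset.mem_filter] at h1
      rw [hL3def, Finset.mem_filter] at h2
      have := h1.2.1
      rw [h2.2.2.1] at this
      exact absurd (congrArg Fin.val this) (by decide)
    have hPb : L1.card + L2.card + L3.card ≤
        (Finset.univ.filter (Prefers (xRk K m (gnum K m)) (xM K m trip J σ) M')).card := by
      have hsub : L1 ∪ L2 ∪ L3 ⊆ Finset.univ.filter (Prefers (xRk K m (gnum K m)) (xM K m trip J σ) M') := by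
        intro a ha
        rw [Finset.mem_union, Finset.mem_union] at ha
        rcases ha with (h | h) | h
        · exact hL1sub h
        · exact hL2sub h
        · exact hL3sub h
      calc L1.card + L2.card + L3.card = (L1 ∪ L2 ∪ L3).card := by
            rw [Finset.card_union_of_disjoint, Finset.card_union_of_disjoint hd12]
            rw [Finset.disjoint_union_left]
            exact ⟨hd13, hd23⟩
        _ ≤ _ := Finset.card_le_card hsub
    -- step 7 : assemble
    have hPf : (Finset.univ.filter (Prefers (xRk K m (gnum K m)) M' (xM K m trip J σ))).card ≤
        G1.card + G2.card + G3.card + G4.card := by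
      calc (Finset.univ.filter (Prefers (xRk K m (gnum K m)) M' (xM K m trip J σ))).card ≤ (G1 ∪ G2 ∪ G3 ∪ G4).card :=
            Finset.card_le_card hPfsub
        _ ≤ (G1 ∪ G2 ∪ G3).card + G4.card := Finset.card_union_le _ _
        _ ≤ (G1 ∪ G2).card + G3.card + G4.card := by
            have := Finset.card_union_le (G1 ∪ G2) G3
            omega
        _ ≤ G1.card + G2.card + G3.card + G4.card := by
            have := Finset.card_union_le G1 G2
            omega
    omega
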